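/- For any positive integer M ≥ 2 and prime p, the images f_{ij}(pℤ_p) for 1 ≤ i ≤ M and 1 ≤ j ≤ p−1, where f_{ij}(x) = p^i/(x+j), are pairwise disjoint subsets of pℤ_p. -/

import Mathlib

section aux

variable {p : ℕ} [hp : Fact p.Prime]

private lemma int_norm_one {k : ℤ} (hk : ¬ (p : ℤ) ∣ k) : ‖(k : ℚ_[p])‖ = 1 := by
  rcases lt_or_eq_of_le (Padic.norm_int_le_one (p := p) k) with h | h
  · exact absurd ((Padic.norm_intCast_lt_one_iff).mp h) hk
  · exact h

private lemma nat_norm_one {j : ℕ} (hj1 : 1 ≤ j) (hj2 : j ≤ p - 1) : ‖(j : ℚ_[p])‖ = 1 := by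
  have hjp : j < p := lt_of_le_of_lt hj2 (Nat.sub_lt hp.1.pos one_pos)
  have : ¬ (p : ℤ) ∣ (j : ℤ) := by
    rw [Int.natCast_dvd_natCast]
    exact Nat.not_dvd_of_pos_of_lt hj1 hjp
  simpa using int_norm_one this

private lemma add_norm_one {x : ℚ_[p]} (hx : ‖x‖ < 1) {j : ℕ} (hj1 : 1 ≤ j) (hj2 : j ≤ p - 1) :
    ‖x + (j : ℚ_[p])‖ = 1 := by
  have hj : ‖(j : ℚ_[p])‖ = 1 := nat_norm_one hj1 hj2
  have hne : ‖x‖ ≠ ‖(j : ℚ_[p])‖ := by rw [hj]; exact ne_of_lt hx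
  rw [Padic.add_eq_max_of_ne hne, hj, max_eq_right hx.le]

private lemma norm_image {x : ℚ_[p]} (hx : ‖x‖ < 1) {i j : ℕ} (hj1 : 1 ≤ j) (hj2 : j ≤ p - 1) :
    ‖(p : ℚ_[p]) ^ i / (x + (j : ℚ_[p]))‖ = (p : ℝ) ^ (-(i : ℤ)) := by
  rw [norm_div, add_norm_one hx hj1 hj2, div_one, Padic.norm_p_pow]

end aux

/-- For `M ≥ 2`, the images `f_{ij}(pℤ_p)` for `1 ≤ i ≤ M`, `1 ≤ j ≤ p-1`, where
`f_{ij}(x) = p^i/(x+j)`, are pairwise disjoint subsets of `pℤ_p`. -/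
theorem stmt_11 (p : ℕ) [hp : Fact p.Prime] (M : ℕ) (hM : 2 ≤ M) :
    (∀ i j : ℕ, 1 ≤ i → i ≤ M → 1 ≤ j → j ≤ p - 1 →
      (fun x : ℚ_[p] => (p : ℚ_[p]) ^ i / (x + (j : ℚ_[p]))) '' {x : ℚ_[p] | ‖x‖ < 1}
        ⊆ {x : ℚ_[p] | ‖x‖ < 1}) ∧
    (∀ i j i' j' : ℕ, 1 ≤ i → i ≤ M → 1 ≤ j → j ≤ p - 1 →
      1 ≤ i' → i' ≤ M → 1 ≤ j' → j' ≤ p - 1 → (i, j) ≠ (i', j') →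
      Disjoint
        ((fun x : ℚ_[p] => (p : ℚ_[p]) ^ i / (x + (j : ℚ_[p]))) '' {x : ℚ_[p] | ‖x‖ < 1})
        ((fun x : ℚ_[p] => (p : ℚ_[p]) ^ i' / (x + (j' : ℚ_[p]))) '' {x : ℚ_[p] | ‖x‖ < 1})) := by
  have hp1 : (1 : ℝ) < (p : ℝ) := by exact_mod_cast hp.1.one_lt
  constructor
  · rintro i j hi1 _ hj1 hj2 y ⟨x, hx, rfl⟩
    simp only [Set.mem_setOf_eq] at hx ⊢
    rw [norm_image hx hj1 hj2]
    calc (p : ℝ) ^ (-(i : ℤ)) < (p : ℝ) ^ (0 : ℤ) := by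
          apply zpow_lt_zpow_right₀ hp1
          omega
      _ = 1 := zpow_zero _
  · rintro i j i' j' hi1 _ hj1 hj2 hi'1 _ hj'1 hj'2 hne
    rw [Set.disjoint_left]
    rintro y ⟨x, hx, rfl⟩ ⟨x', hx', hy⟩
    simp only [Set.mem_setOf_eq] at hx hx'
    dsimp only at hy
    -- norms force i = i'
    have hii : i = i' := by
      have h1 := norm_image hx hj1 hj2 (i := i)
      have h2 := norm_image hx' hj'1 hj'2 (i := i')
      rw [hy, h1] at h2
      have := zpow_right_injective₀ (by positivity) (ne_of_gt hp1) h2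
      omega
    subst hii
    -- denominators equal
    have hd1 : x + (j : ℚ_[p]) ≠ 0 := by
      intro h
      have := add_norm_one hx hj1 hj2; rw [h, norm_zero] at this; norm_num at this
    have hd2 : x' + (j' : ℚ_[p]) ≠ 0 := by
      intro h
      have := add_norm_one hx' hj'1 hj'2; rw [h, norm_zero] at this; norm_num at this
    have hpne : (p : ℚ_[p]) ^ i ≠ 0 := by
      apply pow_ne_zero
      exact_mod_cast (Nat.cast_ne_zero (R := ℚ_[p])).mpr hp.1.ne_zero
    have heq : x + (j : ℚ_[p]) = x' + (j' : ℚ_[p]) := by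
      rw [div_eq_div_iff hd2 hd1] at hy
      have h3 : (p : ℚ_[p]) ^ i * (x + (j : ℚ_[p])) = (p : ℚ_[p]) ^ i * (x' + (j' : ℚ_[p])) := by
        linear_combination hy
      exact mul_left_cancel₀ hpne h3
    -- so j ≡ j' mod small norm, contradiction with j ≠ j'
    have hjj : j ≠ j' := by
      intro h; exact hne (by rw [h])
    set k : ℤ := (j : ℤ) - (j' : ℤ) with hk
    have hsub : ((k : ℤ) : ℚ_[p]) = x' - x := by
      rw [hk]
      push_cast
      linear_combination heq
    have hlt : ‖((k : ℤ) : ℚ_[p])‖ < 1 := by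
      rw [hsub]
      calc ‖x' - x‖ = ‖x' + (-x)‖ := by rw [sub_eq_add_neg]
        _ ≤ max ‖x'‖ ‖-x‖ := Padic.nonarchimedean _ _
        _ < 1 := by rw [norm_neg]; exact max_lt hx' hx
    have hdvd : (p : ℤ) ∣ k := (Padic.norm_intCast_lt_one_iff).mp hlt
    have hjp : j < p := lt_of_le_of_lt hj2 (Nat.sub_lt hp.1.pos one_pos)
    have hj'p : j' < p := lt_of_le_of_lt hj'2 (Nat.sub_lt hp.1.pos one_pos)
    have := Int.eq_zero_of_abs_lt_dvd hdvd (by rw [hk, abs_sub_lt_iff]; constructor <;> omega)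
    omega
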